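/- Let p be a prime and l a power of p. Then for each i, the polynomial f_i ∈ ℤ[u_1, …, u_{n-1}] defined by σ_i(x_1^l, …, x_n^l) = F_i(σ_1, …, σ_n) with f_i = F_i(u_1, …, u_{n-1}, 1) satisfies f_i ≡ u_i^l (mod p). -/

import Mathlib

open MvPolynomial

/-- let `p` be a prime and `l = p^e` a power of `p`. With `F_i` the unique
polynomial satisfying `σ_i(x_1^l, …, x_n^l) = F_i(σ_1, …, σ_n)` and
`f_i = F_i(u_1, …, u_{n-1}, 1)`, one has `f_i ≡ u_i^l (mod p)`. -/
lemma aux_pow_char {σ : Type*} (p e : ℕ) [hp : Fact p.Prime]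
    (g : MvPolynomial σ (ZMod p)) :
    aeval (fun j : σ => (X j : MvPolynomial σ (ZMod p)) ^ p ^ e) g = g ^ p ^ e := by
  induction g using MvPolynomial.induction_on with
  | C a =>
      simp only [aeval_C, algebraMap_eq]
      rw [← C_pow, ZMod.pow_card_pow]
  | add f g hf hg => rw [map_add, hf, hg, add_pow_char_pow]
  | mul_X f j hf => rw [map_mul, hf, aeval_X, mul_pow]

lemma aux_aeval_int {σ τ : Type*} {S : Type*} [CommRing S]
    (φ : ℤ →+* S) (g : σ → MvPolynomial τ ℤ) (h : σ → MvPolynomial τ S)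
    (hgh : ∀ j, MvPolynomial.map φ (g j) = h j) (P : MvPolynomial σ ℤ) :
    MvPolynomial.map φ (aeval g P) = aeval h (MvPolynomial.map φ P) := by
  rw [map_aeval, aeval_def, eval₂_map, coe_eval₂Hom]
  congr 1
  · exact Subsingleton.elim _ _
  · funext j; exact hgh j

theorem stmt15 (n l p e : ℕ) (hp : p.Prime) (hl : l = p ^ e) (hn : 2 ≤ n)
    (i : Fin (n - 1))
    (F : MvPolynomial (Fin n) ℤ)
    (hF : aeval (fun j : Fin n => esymm (Fin n) ℤ ((j : ℕ) + 1)) F =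
          aeval (fun j : Fin n => (X j : MvPolynomial (Fin n) ℤ) ^ l)
            (esymm (Fin n) ℤ ((i : ℕ) + 1)))
    (f : MvPolynomial (Fin (n - 1)) ℤ)
    (hf : f = aeval (fun j : Fin n =>
        if h : (j : ℕ) < n - 1 then (X (⟨j, h⟩ : Fin (n - 1)) : MvPolynomial (Fin (n - 1)) ℤ)
        else 1) F) :
    MvPolynomial.map (Int.castRingHom (ZMod p)) f = X i ^ l := by
  haveI : Fact p.Prime := ⟨hp⟩
  set φ := Int.castRingHom (ZMod p) with hφ
  set i' : Fin n := ⟨(i : ℕ), lt_of_lt_of_le i.2 (Nat.sub_le n 1)⟩ with hi'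
  -- Step 1: reduce hF mod p
  have h1 : aeval (fun j : Fin n => esymm (Fin n) (ZMod p) ((j : ℕ) + 1))
      (MvPolynomial.map φ F) = esymm (Fin n) (ZMod p) ((i : ℕ) + 1) ^ l := by
    have e1 := congrArg (MvPolynomial.map φ) hF
    rw [aux_aeval_int φ _ _ (fun j => by rw [map_esymm]) F,
        aux_aeval_int φ _ (fun j : Fin n => (X j : MvPolynomial (Fin n) (ZMod p)) ^ l)
          (fun j => by simp) (esymm (Fin n) ℤ ((i : ℕ) + 1)),
        map_esymm, hl, aux_pow_char] at e1
    rw [e1, hl]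
  -- injectivity of evaluation at elementary symmetric polynomials
  have hinj : Function.Injective
      (aeval (fun j : Fin n => esymm (Fin n) (ZMod p) ((j : ℕ) + 1)) :
        MvPolynomial (Fin n) (ZMod p) → MvPolynomial (Fin n) (ZMod p)) := by
    intro a b hab
    refine esymmAlgHom_fin_injective (ZMod p) (le_refl n) (Subtype.ext ?_)
    rw [esymmAlgHom_apply, esymmAlgHom_apply]
    exact hab
  have h2 : MvPolynomial.map φ F = X i' ^ l := by
    apply hinj
    rw [h1, map_pow, aeval_X]
  -- Step 2: substitute
  have h3 := aux_aeval_int φ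
      (fun j : Fin n => if h : (j : ℕ) < n - 1
        then (X (⟨j, h⟩ : Fin (n - 1)) : MvPolynomial (Fin (n - 1)) ℤ) else 1)
      (fun j : Fin n => if h : (j : ℕ) < n - 1
        then (X (⟨j, h⟩ : Fin (n - 1)) : MvPolynomial (Fin (n - 1)) (ZMod p)) else 1)
      (fun j => by split <;> simp) F
  rw [hf, h3, h2, map_pow, aeval_X]
  have hlt : (i' : ℕ) < n - 1 := i.2
  rw [dif_pos hlt]
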